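/- Let K and L be arithmetically equivalent number fields. Then for every natural number q, the number of prime ideals of 𝓞_K of absolute norm q equals the number of prime ideals of 𝓞_L of absolute norm q. In particular, for every rational prime p there is a bijection between the primes of K above p and the primes of L above p preserving the inertia degree. -/

import Mathlib

open NumberField

/-- Two number fields are arithmetically equivalent if for every natural number `n`
they have the same (finite) number of nonzero ideals of absolute norm `n`;
this is equivalent to equality of their Dedekind zeta functions. -/
def ArithmeticallyEquivalent (K L : Type*) [Field K] [NumberField K]
    [Field L] [NumberField L] : Prop :=
  ∀ n : ℕ, Nat.card {I : Ideal (𝓞 K) // I ≠ ⊥ ∧ Ideal.absNorm I = n} =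
    Nat.card {I : Ideal (𝓞 L) // I ≠ ⊥ ∧ Ideal.absNorm I = n}

section AuxAE

open UniqueFactorizationMonoid Ideal

variable (K : Type*) [Field K] [NumberField K]

lemma AEaux.finite_of_norm_eq {P : Ideal (𝓞 K) → Prop} {q : ℕ}
    (hP : ∀ I, P I → Ideal.absNorm I = q) : Finite {I : Ideal (𝓞 K) // P I} :=
  Set.Finite.to_subtype ((Ideal.finite_setOf_absNorm_eq q).subset fun I hI => hP I hI)

lemma AEaux.factor_facts {q : ℕ} (hq : 2 ≤ q) {I : Ideal (𝓞 K)} (hI0 : I ≠ ⊥)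
    (hIq : Ideal.absNorm I = q) (hIp : ¬ I.IsPrime) :
    ∀ P ∈ normalizedFactors I, P ≠ ⊥ ∧ P.IsPrime ∧ Ideal.absNorm P < q := by
  have hprime : ∀ P ∈ normalizedFactors I, Prime P := fun P hP =>
    prime_of_normalized_factor P hP
  have hprod : (normalizedFactors I).prod = I :=
    associated_iff_eq.mp (prod_normalizedFactors hI0)
  intro P hP
  have hPpr := hprime P hP
  have hP0 : P ≠ ⊥ := by
    simpa only [← Ideal.zero_eq_bot] using hPpr.ne_zero
  refine ⟨hP0, Ideal.isPrime_of_prime hPpr, ?_⟩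
  obtain ⟨m', hm'⟩ := Multiset.exists_cons_of_mem hP
  have hm'0 : m' ≠ 0 := by
    rintro rfl
    apply hIp
    have hIP : I = P := by
      rw [← hprod, hm', Multiset.prod_cons, Multiset.prod_zero, mul_one]
    exact hIP ▸ Ideal.isPrime_of_prime hPpr
  obtain ⟨Q, hQ⟩ := Multiset.exists_mem_of_ne_zero hm'0
  have hQpr : Prime Q := hprime Q (hm' ▸ Multiset.mem_cons_of_mem hQ)
  have hm'prime : ∀ R ∈ m', Prime R := fun R hR =>
    hprime R (hm' ▸ Multiset.mem_cons_of_mem hR)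
  have hm'prod_ne_top : m'.prod ≠ ⊤ := by
    intro htop
    exact hQpr.not_unit
      (isUnit_of_dvd_unit (Multiset.dvd_prod hQ) (htop ▸ Ideal.isUnit_iff.mpr rfl))
  have hm'prod_ne_bot : m'.prod ≠ ⊥ := by
    rw [← Ideal.zero_eq_bot]
    exact Multiset.prod_ne_zero_of_prime m' hm'prime
  have ht2 : 2 ≤ Ideal.absNorm m'.prod := by
    have h1 : Ideal.absNorm m'.prod ≠ 1 := fun h =>
      hm'prod_ne_top (Ideal.absNorm_eq_one_iff.mp h)
    have h0 : Ideal.absNorm m'.prod ≠ 0 := fun h =>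
      hm'prod_ne_bot (Ideal.absNorm_eq_zero_iff.mp h)
    omega
  have heq : Ideal.absNorm P * Ideal.absNorm m'.prod = q := by
    rw [← _root_.map_mul, ← Multiset.prod_cons, ← hm', hprod, hIq]
  have hP1 : Ideal.absNorm P ≠ 0 := by
    intro h0
    rw [h0, zero_mul] at heq
    omega
  have hle : Ideal.absNorm P * 2 ≤ q := heq ▸ Nat.mul_le_mul_left _ ht2
  omega

variable (L : Type*) [Field L] [NumberField L]

lemma AEaux.lift_mem {q : ℕ} (hq : 2 ≤ q) (σ : Ideal (𝓞 K) → Ideal (𝓞 L))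
    (hσ : ∀ P : Ideal (𝓞 K), P ≠ ⊥ → P.IsPrime → Ideal.absNorm P < q →
      σ P ≠ ⊥ ∧ (σ P).IsPrime ∧ Ideal.absNorm (σ P) = Ideal.absNorm P)
    {I : Ideal (𝓞 K)} (hI0 : I ≠ ⊥) (hIq : Ideal.absNorm I = q) (hIp : ¬ I.IsPrime) :
    (((normalizedFactors I).map σ).prod ≠ ⊥ ∧
        Ideal.absNorm ((normalizedFactors I).map σ).prod = q ∧
        ¬ (((normalizedFactors I).map σ).prod).IsPrime) ∧
      normalizedFactors (((normalizedFactors I).map σ).prod) = (normalizedFactors I).map σ := by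
  have hfacts := AEaux.factor_facts K hq hI0 hIq hIp
  have hprime : ∀ P ∈ normalizedFactors I, Prime P := fun P hP =>
    prime_of_normalized_factor P hP
  have hprod : (normalizedFactors I).prod = I :=
    associated_iff_eq.mp (prod_normalizedFactors hI0)
  have hσprime : ∀ Q ∈ (normalizedFactors I).map σ, Prime Q := by
    intro Q hQ
    obtain ⟨P, hP, rfl⟩ := Multiset.mem_map.mp hQ
    obtain ⟨h1, h2, h3⟩ := hfacts P hP
    obtain ⟨g1, g2, g3⟩ := hσ P h1 h2 h3
    exact (Ideal.prime_iff_isPrime g1).mpr g2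
  have hfactors : normalizedFactors (((normalizedFactors I).map σ).prod) =
      (normalizedFactors I).map σ :=
    normalizedFactors_prod_of_prime hσprime
  have hJ0 : ((normalizedFactors I).map σ).prod ≠ ⊥ := by
    rw [← Ideal.zero_eq_bot]
    exact Multiset.prod_ne_zero_of_prime _ hσprime
  have hJnorm : Ideal.absNorm ((normalizedFactors I).map σ).prod = q := by
    rw [map_multiset_prod, Multiset.map_map]
    have hc : (normalizedFactors I).map (Ideal.absNorm ∘ σ) =
        (normalizedFactors I).map Ideal.absNorm := by
      refine Multiset.map_congr rfl fun P hP => ?_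
      obtain ⟨h1, h2, h3⟩ := hfacts P hP
      exact (hσ P h1 h2 h3).2.2
    rw [hc, ← map_multiset_prod, hprod, hIq]
  refine ⟨⟨hJ0, hJnorm, ?_⟩, hfactors⟩
  intro hpr
  have hprJ : Prime ((normalizedFactors I).map σ).prod :=
    (Ideal.prime_iff_isPrime hJ0).mpr hpr
  have hsing : normalizedFactors (((normalizedFactors I).map σ).prod) =
      {normalize (((normalizedFactors I).map σ).prod)} :=
    normalizedFactors_irreducible hprJ.irreducible
  have hc1 : Multiset.card ((normalizedFactors I).map σ) = 1 := by
    rw [← hfactors, hsing, Multiset.card_singleton]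
  rw [Multiset.card_map] at hc1
  obtain ⟨P, hmP⟩ := Multiset.card_eq_one.mp hc1
  apply hIp
  have hIP : I = P := by rw [← hprod, hmP, Multiset.prod_singleton]
  exact hIP ▸ Ideal.isPrime_of_prime (hprime P (hmP ▸ Multiset.mem_singleton_self P))

lemma AEaux.lift_roundtrip {q : ℕ} (hq : 2 ≤ q)
    (σ : Ideal (𝓞 K) → Ideal (𝓞 L)) (τ : Ideal (𝓞 L) → Ideal (𝓞 K))
    (hσ : ∀ P : Ideal (𝓞 K), P ≠ ⊥ → P.IsPrime → Ideal.absNorm P < q →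
      σ P ≠ ⊥ ∧ (σ P).IsPrime ∧ Ideal.absNorm (σ P) = Ideal.absNorm P)
    (hτσ : ∀ P : Ideal (𝓞 K), P ≠ ⊥ → P.IsPrime → Ideal.absNorm P < q → τ (σ P) = P)
    {I : Ideal (𝓞 K)} (hI0 : I ≠ ⊥) (hIq : Ideal.absNorm I = q) (hIp : ¬ I.IsPrime) :
    ((normalizedFactors (((normalizedFactors I).map σ).prod)).map τ).prod = I := by
  have key := AEaux.lift_mem K L hq σ hσ hI0 hIq hIp
  have hfacts := AEaux.factor_facts K hq hI0 hIq hIp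
  rw [key.2, Multiset.map_map]
  have hc : (normalizedFactors I).map (τ ∘ σ) = (normalizedFactors I).map id := by
    refine Multiset.map_congr rfl fun P hP => ?_
    obtain ⟨h1, h2, h3⟩ := hfacts P hP
    exact hτσ P h1 h2 h3
  rw [hc, Multiset.map_id]
  exact associated_iff_eq.mp (prod_normalizedFactors hI0)

/-- Fibering the primes of norm `< q` by their norm. -/
noncomputable def AEaux.sigmaNormEquiv (q : ℕ) :
    {P : Ideal (𝓞 K) // P ≠ ⊥ ∧ P.IsPrime ∧ Ideal.absNorm P < q} ≃
      Σ j : ℕ, {P : Ideal (𝓞 K) // (P ≠ ⊥ ∧ P.IsPrime ∧ Ideal.absNorm P = j) ∧ j < q} where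
  toFun P := ⟨Ideal.absNorm P.1, ⟨P.1, ⟨P.2.1, P.2.2.1, rfl⟩, P.2.2.2⟩⟩
  invFun x := ⟨x.2.1, x.2.2.1.1, x.2.2.1.2.1, by
    rw [x.2.2.1.2.2]; exact x.2.2.2⟩
  left_inv P := rfl
  right_inv x := by
    obtain ⟨j, P, ⟨h1, h2, h3⟩, h4⟩ := x
    subst h3
    rfl

lemma AEaux.card_split {α : Type*} (c p : α → Prop) [Finite {x // c x}] :
    Nat.card {x // c x} =
      Nat.card {x // c x ∧ p x} + Nat.card {x // c x ∧ ¬ p x} := by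
  classical
  haveI : Finite {x // c x ∧ p x} :=
    Finite.of_injective (fun y => (⟨y.1, y.2.1⟩ : {x // c x}))
      fun a b hab => Subtype.ext (Subtype.mk_eq_mk.mp hab)
  haveI : Finite {x // c x ∧ ¬ p x} :=
    Finite.of_injective (fun y => (⟨y.1, y.2.1⟩ : {x // c x}))
      fun a b hab => Subtype.ext (Subtype.mk_eq_mk.mp hab)
  have eqv : {x // c x ∧ p x} ⊕ {x // c x ∧ ¬ p x} ≃ {x // c x} :=
    (Equiv.sumCongr (Equiv.subtypeSubtypeEquivSubtypeInter c p).symm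
      (Equiv.subtypeSubtypeEquivSubtypeInter c (fun x => ¬ p x)).symm).trans
      (Equiv.sumCompl fun x : {y // c y} => p x.1)
  rw [← Nat.card_congr eqv, Nat.card_sum]

lemma AEaux.primes_count (h : ArithmeticallyEquivalent K L) :
    ∀ q : ℕ, Nat.card {P : Ideal (𝓞 K) // P ≠ ⊥ ∧ P.IsPrime ∧ Ideal.absNorm P = q} =
      Nat.card {Q : Ideal (𝓞 L) // Q ≠ ⊥ ∧ Q.IsPrime ∧ Ideal.absNorm Q = q} := by
  intro q
  induction q using Nat.strong_induction_on with
  | _ q IH =>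
  match q, IH with
  | 0, _ =>
    haveI : IsEmpty {P : Ideal (𝓞 K) // P ≠ ⊥ ∧ P.IsPrime ∧ Ideal.absNorm P = 0} :=
      ⟨fun P => P.2.1 (Ideal.absNorm_eq_zero_iff.mp P.2.2.2)⟩
    haveI : IsEmpty {Q : Ideal (𝓞 L) // Q ≠ ⊥ ∧ Q.IsPrime ∧ Ideal.absNorm Q = 0} :=
      ⟨fun Q => Q.2.1 (Ideal.absNorm_eq_zero_iff.mp Q.2.2.2)⟩
    rw [Nat.card_of_isEmpty, Nat.card_of_isEmpty]
  | 1, _ =>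
    haveI : IsEmpty {P : Ideal (𝓞 K) // P ≠ ⊥ ∧ P.IsPrime ∧ Ideal.absNorm P = 1} :=
      ⟨fun P => P.2.2.1.ne_top (Ideal.absNorm_eq_one_iff.mp P.2.2.2)⟩
    haveI : IsEmpty {Q : Ideal (𝓞 L) // Q ≠ ⊥ ∧ Q.IsPrime ∧ Ideal.absNorm Q = 1} :=
      ⟨fun Q => Q.2.2.1.ne_top (Ideal.absNorm_eq_one_iff.mp Q.2.2.2)⟩
    rw [Nat.card_of_isEmpty, Nat.card_of_isEmpty]
  | (n + 2), IH => ?_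
  set q : ℕ := n + 2 with hqdef
  have hq : 2 ≤ q := by omega
  -- fiberwise equivalences on primes of smaller norm
  have hstep : ∀ j, j < q →
      Nonempty ({P : Ideal (𝓞 K) // P ≠ ⊥ ∧ P.IsPrime ∧ Ideal.absNorm P = j} ≃
        {Q : Ideal (𝓞 L) // Q ≠ ⊥ ∧ Q.IsPrime ∧ Ideal.absNorm Q = j}) := by
    intro j hj
    haveI := AEaux.finite_of_norm_eq K
      (P := fun P => P ≠ ⊥ ∧ P.IsPrime ∧ Ideal.absNorm P = j) (fun I hI => hI.2.2)
    haveI := AEaux.finite_of_norm_eq L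
      (P := fun P => P ≠ ⊥ ∧ P.IsPrime ∧ Ideal.absNorm P = j) (fun I hI => hI.2.2)
    exact Finite.card_eq.mp (IH j hj)
  have fib : ∀ j : ℕ,
      {P : Ideal (𝓞 K) // (P ≠ ⊥ ∧ P.IsPrime ∧ Ideal.absNorm P = j) ∧ j < q} ≃
      {Q : Ideal (𝓞 L) // (Q ≠ ⊥ ∧ Q.IsPrime ∧ Ideal.absNorm Q = j) ∧ j < q} := by
    intro j
    by_cases hj : j < q
    · exact ((Equiv.subtypeEquivRight fun P => and_iff_left hj).trans
        (hstep j hj).some).trans (Equiv.subtypeEquivRight fun Q => (and_iff_left hj).symm)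
    · haveI : IsEmpty
          {P : Ideal (𝓞 K) // (P ≠ ⊥ ∧ P.IsPrime ∧ Ideal.absNorm P = j) ∧ j < q} :=
        ⟨fun P => hj P.2.2⟩
      haveI : IsEmpty
          {Q : Ideal (𝓞 L) // (Q ≠ ⊥ ∧ Q.IsPrime ∧ Ideal.absNorm Q = j) ∧ j < q} :=
        ⟨fun Q => hj Q.2.2⟩
      exact Equiv.equivOfIsEmpty _ _
  set E : {P : Ideal (𝓞 K) // P ≠ ⊥ ∧ P.IsPrime ∧ Ideal.absNorm P < q} ≃
      {Q : Ideal (𝓞 L) // Q ≠ ⊥ ∧ Q.IsPrime ∧ Ideal.absNorm Q < q} :=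
    (AEaux.sigmaNormEquiv K q).trans
      ((Equiv.sigmaCongrRight fib).trans (AEaux.sigmaNormEquiv L q).symm) with hE_def
  have hE : ∀ P, Ideal.absNorm (E P).1 = Ideal.absNorm P.1 := by
    intro P
    exact ((Equiv.sigmaCongrRight fib) ((AEaux.sigmaNormEquiv K q) P)).2.2.1.2.2
  have hEsymm : ∀ Q, Ideal.absNorm (E.symm Q).1 = Ideal.absNorm Q.1 := by
    intro Q
    conv_rhs => rw [← E.apply_symm_apply Q]
    exact (hE (E.symm Q)).symm
  classical
  -- the induced maps on ideals
  set σ : Ideal (𝓞 K) → Ideal (𝓞 L) := fun P =>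
    if hP : P ≠ ⊥ ∧ P.IsPrime ∧ Ideal.absNorm P < q then (E ⟨P, hP⟩).1 else ⊥ with hσ_def
  set τ : Ideal (𝓞 L) → Ideal (𝓞 K) := fun Q =>
    if hQ : Q ≠ ⊥ ∧ Q.IsPrime ∧ Ideal.absNorm Q < q then (E.symm ⟨Q, hQ⟩).1 else ⊥ with hτ_def
  have hσ : ∀ P : Ideal (𝓞 K), P ≠ ⊥ → P.IsPrime → Ideal.absNorm P < q →
      σ P ≠ ⊥ ∧ (σ P).IsPrime ∧ Ideal.absNorm (σ P) = Ideal.absNorm P := by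
    intro P h1 h2 h3
    rw [hσ_def]
    simp only [dif_pos (⟨h1, h2, h3⟩ : P ≠ ⊥ ∧ P.IsPrime ∧ Ideal.absNorm P < q)]
    exact ⟨(E ⟨P, ⟨h1, h2, h3⟩⟩).2.1, (E ⟨P, ⟨h1, h2, h3⟩⟩).2.2.1, hE ⟨P, ⟨h1, h2, h3⟩⟩⟩
  have hτ : ∀ Q : Ideal (𝓞 L), Q ≠ ⊥ → Q.IsPrime → Ideal.absNorm Q < q →
      τ Q ≠ ⊥ ∧ (τ Q).IsPrime ∧ Ideal.absNorm (τ Q) = Ideal.absNorm Q := by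
    intro Q h1 h2 h3
    rw [hτ_def]
    simp only [dif_pos (⟨h1, h2, h3⟩ : Q ≠ ⊥ ∧ Q.IsPrime ∧ Ideal.absNorm Q < q)]
    exact ⟨(E.symm ⟨Q, ⟨h1, h2, h3⟩⟩).2.1, (E.symm ⟨Q, ⟨h1, h2, h3⟩⟩).2.2.1,
      hEsymm ⟨Q, ⟨h1, h2, h3⟩⟩⟩
  have hτσ : ∀ P : Ideal (𝓞 K), P ≠ ⊥ → P.IsPrime → Ideal.absNorm P < q → τ (σ P) = P := by
    intro P h1 h2 h3
    have hσP : σ P = (E ⟨P, ⟨h1, h2, h3⟩⟩).1 := by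
      rw [hσ_def]; exact dif_pos _
    rw [hσP, hτ_def]
    simp only [dif_pos (E ⟨P, ⟨h1, h2, h3⟩⟩).2]
    exact congrArg Subtype.val (E.symm_apply_apply ⟨P, ⟨h1, h2, h3⟩⟩)
  have hστ : ∀ Q : Ideal (𝓞 L), Q ≠ ⊥ → Q.IsPrime → Ideal.absNorm Q < q → σ (τ Q) = Q := by
    intro Q h1 h2 h3
    have hτQ : τ Q = (E.symm ⟨Q, ⟨h1, h2, h3⟩⟩).1 := by
      rw [hτ_def]; exact dif_pos _
    rw [hτQ, hσ_def]
    simp only [dif_pos (E.symm ⟨Q, ⟨h1, h2, h3⟩⟩).2]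
    exact congrArg Subtype.val (E.apply_symm_apply ⟨Q, ⟨h1, h2, h3⟩⟩)
  -- the bijection on non-prime ideals of norm q
  have eB : {I : Ideal (𝓞 K) // (I ≠ ⊥ ∧ Ideal.absNorm I = q) ∧ ¬ I.IsPrime} ≃
      {J : Ideal (𝓞 L) // (J ≠ ⊥ ∧ Ideal.absNorm J = q) ∧ ¬ J.IsPrime} :=
    { toFun := fun I => ⟨((UniqueFactorizationMonoid.normalizedFactors I.1).map σ).prod, by
        have key := (AEaux.lift_mem K L hq σ hσ I.2.1.1 I.2.1.2 I.2.2).1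
        exact ⟨⟨key.1, key.2.1⟩, key.2.2⟩⟩
      invFun := fun J => ⟨((UniqueFactorizationMonoid.normalizedFactors J.1).map τ).prod, by
        have key := (AEaux.lift_mem L K hq τ hτ J.2.1.1 J.2.1.2 J.2.2).1
        exact ⟨⟨key.1, key.2.1⟩, key.2.2⟩⟩
      left_inv := fun I => Subtype.ext
        (AEaux.lift_roundtrip K L hq σ τ hσ hτσ I.2.1.1 I.2.1.2 I.2.2)
      right_inv := fun J => Subtype.ext
        (AEaux.lift_roundtrip L K hq τ σ hτ hστ J.2.1.1 J.2.1.2 J.2.2) }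
  -- counting
  haveI : Finite {I : Ideal (𝓞 K) // I ≠ ⊥ ∧ Ideal.absNorm I = q} :=
    AEaux.finite_of_norm_eq K (fun I hI => hI.2)
  haveI : Finite {I : Ideal (𝓞 L) // I ≠ ⊥ ∧ Ideal.absNorm I = q} :=
    AEaux.finite_of_norm_eq L (fun I hI => hI.2)
  have hsplitK := AEaux.card_split
    (fun I : Ideal (𝓞 K) => I ≠ ⊥ ∧ Ideal.absNorm I = q) (fun I => I.IsPrime)
  have hsplitL := AEaux.card_split
    (fun I : Ideal (𝓞 L) => I ≠ ⊥ ∧ Ideal.absNorm I = q) (fun I => I.IsPrime)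
  have hB : Nat.card {I : Ideal (𝓞 K) // (I ≠ ⊥ ∧ Ideal.absNorm I = q) ∧ ¬ I.IsPrime} =
      Nat.card {J : Ideal (𝓞 L) // (J ≠ ⊥ ∧ Ideal.absNorm J = q) ∧ ¬ J.IsPrime} :=
    Nat.card_congr eB
  have hPK : Nat.card {P : Ideal (𝓞 K) // P ≠ ⊥ ∧ P.IsPrime ∧ Ideal.absNorm P = q} =
      Nat.card {I : Ideal (𝓞 K) // (I ≠ ⊥ ∧ Ideal.absNorm I = q) ∧ I.IsPrime} :=
    Nat.card_congr (Equiv.subtypeEquivRight fun P => by tauto)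
  have hPL : Nat.card {P : Ideal (𝓞 L) // P ≠ ⊥ ∧ P.IsPrime ∧ Ideal.absNorm P = q} =
      Nat.card {I : Ideal (𝓞 L) // (I ≠ ⊥ ∧ Ideal.absNorm I = q) ∧ I.IsPrime} :=
    Nat.card_congr (Equiv.subtypeEquivRight fun P => by tauto)
  have hAB := h q
  omega

lemma AEaux.norm_eq_pow {p : ℕ} (hp : p.Prime) (P : Ideal (𝓞 K)) (hP : P.IsPrime)
    (hmem : (p : 𝓞 K) ∈ P) :
    Ideal.absNorm P = p ^ ((Ideal.absNorm P).factorization p) := by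
  have hdvd : Ideal.absNorm P ∣ Ideal.absNorm (Ideal.span {(p : 𝓞 K)}) :=
    Ideal.absNorm_dvd_absNorm_of_le ((Ideal.span_singleton_le_iff_mem _).mpr hmem)
  rw [Ideal.absNorm_span_singleton] at hdvd
  have hcast : (p : 𝓞 K) = algebraMap ℤ (𝓞 K) (p : ℤ) := by simp
  rw [hcast, Algebra.norm_algebraMap_of_basis (Module.Free.chooseBasis ℤ (𝓞 K)),
    Int.natAbs_pow, Int.natAbs_natCast] at hdvd
  obtain ⟨k, _, hker⟩ := (Nat.dvd_prime_pow hp).mp hdvd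
  rw [hker, hp.factorization_pow, Finsupp.single_eq_same]

/-- Fibering the primes above `p` by the exponent in their norm. -/
noncomputable def AEaux.primesAboveEquivSigma {p : ℕ} (hp : p.Prime) :
    {P : Ideal (𝓞 K) // P ≠ ⊥ ∧ P.IsPrime ∧ (p : 𝓞 K) ∈ P} ≃
      Σ k : ℕ, {P : Ideal (𝓞 K) // P ≠ ⊥ ∧ P.IsPrime ∧ Ideal.absNorm P = p ^ k} where
  toFun P := ⟨(Ideal.absNorm P.1).factorization p,
    ⟨P.1, P.2.1, P.2.2.1, AEaux.norm_eq_pow K hp P.1 P.2.2.1 P.2.2.2⟩⟩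
  invFun x := ⟨x.2.1, x.2.2.1, x.2.2.2.1, by
    have hmem := Ideal.absNorm_mem x.2.1
    rw [x.2.2.2.2, Nat.cast_pow] at hmem
    exact x.2.2.2.1.mem_of_pow_mem _ hmem⟩
  left_inv P := rfl
  right_inv x := by
    obtain ⟨k, P, h1, h2, h3⟩ := x
    have hk : (Ideal.absNorm P).factorization p = k := by
      rw [h3, hp.factorization_pow, Finsupp.single_eq_same]
    subst hk
    rfl

end AuxAE

/-- Arithmetically equivalent number fields have, for every `q : ℕ`, the same number
of nonzero prime ideals of absolute norm `q`; in particular, for every rational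
prime `p` there is a bijection between the primes above `p` in the two fields
preserving the inertia degree (equivalently, the absolute norm). -/
theorem primes_count_eq_of_arithmeticallyEquivalent
    (K L : Type*) [Field K] [NumberField K] [Field L] [NumberField L]
    (h : ArithmeticallyEquivalent K L) :
    (∀ q : ℕ, Nat.card {P : Ideal (𝓞 K) // P ≠ ⊥ ∧ P.IsPrime ∧ Ideal.absNorm P = q} =
      Nat.card {Q : Ideal (𝓞 L) // Q ≠ ⊥ ∧ Q.IsPrime ∧ Ideal.absNorm Q = q}) ∧
    ∀ p : ℕ, p.Prime →
      ∃ e : {P : Ideal (𝓞 K) // P ≠ ⊥ ∧ P.IsPrime ∧ (p : 𝓞 K) ∈ P} ≃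
        {Q : Ideal (𝓞 L) // Q ≠ ⊥ ∧ Q.IsPrime ∧ (p : 𝓞 L) ∈ Q},
        ∀ P, Ideal.absNorm ((e P) : Ideal (𝓞 L)) = Ideal.absNorm (P : Ideal (𝓞 K)) := by
  refine ⟨AEaux.primes_count K L h, ?_⟩
  intro p hp
  have hfib : ∀ k : ℕ,
      Nonempty ({P : Ideal (𝓞 K) // P ≠ ⊥ ∧ P.IsPrime ∧ Ideal.absNorm P = p ^ k} ≃
        {Q : Ideal (𝓞 L) // Q ≠ ⊥ ∧ Q.IsPrime ∧ Ideal.absNorm Q = p ^ k}) := by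
    intro k
    haveI := AEaux.finite_of_norm_eq K
      (P := fun P => P ≠ ⊥ ∧ P.IsPrime ∧ Ideal.absNorm P = p ^ k) (fun I hI => hI.2.2)
    haveI := AEaux.finite_of_norm_eq L
      (P := fun P => P ≠ ⊥ ∧ P.IsPrime ∧ Ideal.absNorm P = p ^ k) (fun I hI => hI.2.2)
    exact Finite.card_eq.mp (AEaux.primes_count K L h (p ^ k))
  classical
  set f : ∀ k : ℕ,
      {P : Ideal (𝓞 K) // P ≠ ⊥ ∧ P.IsPrime ∧ Ideal.absNorm P = p ^ k} ≃
      {Q : Ideal (𝓞 L) // Q ≠ ⊥ ∧ Q.IsPrime ∧ Ideal.absNorm Q = p ^ k} :=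
    fun k => (hfib k).some with hf_def
  refine ⟨(AEaux.primesAboveEquivSigma K hp).trans
    ((Equiv.sigmaCongrRight f).trans (AEaux.primesAboveEquivSigma L hp).symm), ?_⟩
  intro P
  have h1 := ((Equiv.sigmaCongrRight f)
    ((AEaux.primesAboveEquivSigma K hp) P)).2.2.2.2
  have h2 := AEaux.norm_eq_pow K hp P.1 P.2.2.1 P.2.2.2
  exact h1.trans h2.symm
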